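/- Let F be the free group on a_1, b_1, a_2, b_2, and θ the endomorphism given by θ(a_1) = a_1 (b_2^{-1} a_2^{-1} b_2), θ(a_2) = a_2, θ(b_1) = b_1, θ(b_2) = a_2 b_2 (a_1^{-1} b_1 a_1)(b_2^{-1} a_2^{-1} b_2). Then θ is an automorphism of F. -/

import Mathlib

namespace SlidingAlongA2

/-- The free group on `a₁, b₁, a₂, b₂` (indices `0,1,2,3`). -/
abbrev F := FreeGroup (Fin 4)

def a1 : F := FreeGroup.of 0
def b1 : F := FreeGroup.of 1
def a2 : F := FreeGroup.of 2
def b2 : F := FreeGroup.of 3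

/-- The endomorphism θ ('sliding along a₂'): `a₁ ↦ a₁ (b₂⁻¹ a₂⁻¹ b₂)`,
`b₁ ↦ b₁`, `a₂ ↦ a₂`, `b₂ ↦ a₂ b₂ (a₁⁻¹ b₁ a₁)(b₂⁻¹ a₂⁻¹ b₂)`. -/
noncomputable def θ : F →* F :=
  FreeGroup.lift
    ![a1 * (b2⁻¹ * a2⁻¹ * b2), b1, a2,
      a2 * b2 * (a1⁻¹ * b1 * a1) * (b2⁻¹ * a2⁻¹ * b2)]

/-- θ is an automorphism of the free group `F`. -/
theorem theta_automorphism :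
    ∃ θ' : F →* F, θ'.comp θ = MonoidHom.id F ∧ θ.comp θ' = MonoidHom.id F := by
  refine ⟨FreeGroup.lift
    ![b1 * a1 * b2⁻¹ * a2 * b2 * a1⁻¹ * b1⁻¹ * a1, b1, a2,
      b2 * a1⁻¹ * b1⁻¹ * a1], ?_, ?_⟩ <;>
  · apply FreeGroup.ext_hom
    intro i
    fin_cases i <;>
    · simp [θ, a1, b1, a2, b2]
      all_goals group

end SlidingAlongA2
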